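/- Define h : [0,1]² → [0,1] by h(t,v) = 𝟙_{t < v/2} + v·𝟙_{(v/2,(v+1)/2)}(t). Then C(u,v) := ∫₀ᵘ h(t,v) dt is a stochastically increasing bivariate copula with ξ(C) = ψ(C), and C is not symmetric, i.e. there exist (u,v) with C(u,v) ≠ C(v,u). -/

import Mathlib

open MeasureTheory Set

noncomputable section

def IsCopula (C : ℝ → ℝ → ℝ) : Prop :=
  (∀ u ∈ Icc (0:ℝ) 1, ∀ v ∈ Icc (0:ℝ) 1, C u v ∈ Icc (0:ℝ) 1) ∧
  (∀ u ∈ Icc (0:ℝ) 1, C u 0 = 0 ∧ C u 1 = u) ∧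
  (∀ v ∈ Icc (0:ℝ) 1, C 0 v = 0 ∧ C 1 v = v) ∧
  (∀ u₁ ∈ Icc (0:ℝ) 1, ∀ u₂ ∈ Icc (0:ℝ) 1, ∀ v₁ ∈ Icc (0:ℝ) 1, ∀ v₂ ∈ Icc (0:ℝ) 1,
    u₁ ≤ u₂ → v₁ ≤ v₂ → 0 ≤ C u₂ v₂ - C u₁ v₂ - C u₂ v₁ + C u₁ v₁)

/-- The (a.e. defined) partial derivative of `C` with respect to its first argument. -/
def d1 (C : ℝ → ℝ → ℝ) (t v : ℝ) : ℝ := deriv (fun s => C s v) t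

/-- Chatterjee's rank correlation. -/
def xi (C : ℝ → ℝ → ℝ) : ℝ :=
  6 * (∫ v in (0:ℝ)..1, ∫ t in (0:ℝ)..1, (d1 C t v) ^ 2) - 2

/-- Spearman's footrule. -/
def psi (C : ℝ → ℝ → ℝ) : ℝ :=
  6 * (∫ v in (0:ℝ)..1, C v v) - 2

/-- Stochastically increasing: for each `v`, `t ↦ ∂₁C(t,v)` agrees a.e. on `[0,1]`
with a non-increasing function. -/
def IsSI (C : ℝ → ℝ → ℝ) : Prop :=
  ∀ v ∈ Icc (0:ℝ) 1, ∃ g : ℝ → ℝ, AntitoneOn g (Icc (0:ℝ) 1) ∧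
    (∀ᵐ t ∂(volume.restrict (Icc (0:ℝ) 1)), d1 C t v = g t)

/-- The function `h(t,v) = 𝟙_{t < v/2} + v·𝟙_{(v/2,(v+1)/2)}(t)`. -/
def hAsym (t v : ℝ) : ℝ :=
  (if t < v / 2 then (1:ℝ) else 0) + v * (if t ∈ Ioo (v / 2) ((v + 1) / 2) then (1:ℝ) else 0)

/-- The copula `C(u,v) = ∫₀ᵘ h(t,v) dt` induced by `hAsym`. -/
def CAsym (u v : ℝ) : ℝ := ∫ t in (0:ℝ)..u, hAsym t v

lemma ae_ne (c : ℝ) : ∀ᵐ t : ℝ ∂volume, t ≠ c := by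
  rw [ae_iff]
  simp [measure_singleton]

lemma hAsym_meas (v : ℝ) : Measurable (fun t => hAsym t v) := by
  unfold hAsym
  apply Measurable.add
  · exact measurable_const.ite measurableSet_Iio measurable_const
  · exact (measurable_const.ite measurableSet_Ioo measurable_const).const_mul v

lemma bdd_intInt {f : ℝ → ℝ} (hm : Measurable f) (M : ℝ) (hb : ∀ t, |f t| ≤ M)
    (a b : ℝ) : IntervalIntegrable f volume a b := by
  rw [intervalIntegrable_iff]
  refine Integrable.mono' (g := fun _ => M) ?_ hm.aestronglyMeasurable (ae_of_all _ hb)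
  exact (integrableOn_const_iff).mpr (Or.inr measure_Ioc_lt_top)

lemma hAsym_intInt (v a b : ℝ) : IntervalIntegrable (fun t => hAsym t v) volume a b := by
  refine bdd_intInt (hAsym_meas v) (1 + |v|) (fun t => ?_) a b
  unfold hAsym
  have : |v * (if t ∈ Ioo (v / 2) ((v + 1) / 2) then (1:ℝ) else 0)| ≤ |v| := by
    rw [abs_mul]; split_ifs <;> simp [abs_nonneg]
  calc |_| ≤ |(if t < v / 2 then (1:ℝ) else 0)| + _ := abs_add_le _ _
    _ ≤ 1 + |v| := by gcongr; split_ifs <;> simp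

lemma integral_eq_const_of_ae {a b c : ℝ} {f : ℝ → ℝ}
    (h : ∀ᵐ t ∂volume, t ∈ Set.uIoc a b → f t = c) :
    ∫ t in a..b, f t = c * (b - a) := by
  rw [intervalIntegral.integral_congr_ae h, intervalIntegral.integral_const, smul_eq_mul,
    mul_comm]

lemma CAsym_left {u v : ℝ} (hu0 : 0 ≤ u) (hu : u ≤ v / 2) : CAsym u v = u := by
  have : CAsym u v = 1 * (u - 0) := by
    refine integral_eq_const_of_ae ?_
    filter_upwards [ae_ne (v/2)] with t ht hmem
    rw [Set.uIoc_of_le hu0] at hmem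
    have h1 : t < v / 2 := lt_of_le_of_ne (hmem.2.trans hu) ht
    simp [hAsym, h1, h1.asymm, not_lt.mpr h1.le]
  simpa using this

lemma CAsym_mid {u v : ℝ} (hv : 0 ≤ v) (h1 : v / 2 ≤ u) (h2 : u ≤ (v + 1) / 2) :
    CAsym u v = v / 2 + v * (u - v / 2) := by
  have hsplit : CAsym (v/2) v + ∫ t in (v/2)..u, hAsym t v = CAsym u v :=
    intervalIntegral.integral_add_adjacent_intervals (hAsym_intInt v 0 (v/2)) (hAsym_intInt v (v/2) u)
  have hmidval : ∫ t in (v/2)..u, hAsym t v = v * (u - v / 2) := by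
    refine integral_eq_const_of_ae ?_
    filter_upwards [ae_ne ((v+1)/2)] with t ht hmem
    rw [Set.uIoc_of_le h1] at hmem
    have ha : ¬ (t < v / 2) := not_lt.mpr hmem.1.le
    have hb : t ∈ Ioo (v / 2) ((v + 1) / 2) :=
      ⟨hmem.1, lt_of_le_of_ne (hmem.2.trans h2) ht⟩
    simp [hAsym, ha, hb]
  have hleft : CAsym (v/2) v = v / 2 := CAsym_left (by linarith) le_rfl
  linarith [hsplit]

lemma CAsym_right {u v : ℝ} (hv : 0 ≤ v) (h1 : (v + 1) / 2 ≤ u) : CAsym u v = v := by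
  have hsplit : CAsym ((v+1)/2) v + ∫ t in ((v+1)/2)..u, hAsym t v = CAsym u v :=
    intervalIntegral.integral_add_adjacent_intervals (hAsym_intInt v 0 ((v+1)/2))
      (hAsym_intInt v ((v+1)/2) u)
  have htail : ∫ t in ((v+1)/2)..u, hAsym t v = 0 * (u - (v+1)/2) := by
    refine integral_eq_const_of_ae ?_
    filter_upwards with t hmem
    rw [Set.uIoc_of_le h1] at hmem
    have ha : ¬ (t < v / 2) := by have := hmem.1; push_neg; nlinarith
    have hb : t ∉ Ioo (v / 2) ((v + 1) / 2) := by
      intro hx; exact absurd hx.2 (not_lt.mpr hmem.1.le)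
    simp [hAsym, ha, hb]
  have hmid : CAsym ((v+1)/2) v = v := by
    rw [CAsym_mid hv (by linarith) le_rfl]; ring
  simp only [zero_mul] at htail
  linarith [hsplit]

/-- The a.e. version of the partial derivative. -/
def gAsym (v t : ℝ) : ℝ := if t < v / 2 then 1 else if t < (v + 1) / 2 then v else 0


lemma deriv_CAsym {v t : ℝ} (hv : 0 ≤ v) (hv1 : v ≤ 1) (ht0 : 0 < t) (ht1 : t < 1)
    (hne1 : t ≠ v / 2) (hne2 : t ≠ (v + 1) / 2) :
    deriv (fun s => CAsym s v) t = gAsym v t := by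
  rcases lt_or_gt_of_ne hne1 with h | h
  · -- t < v/2
    have hev : (fun s => CAsym s v) =ᶠ[nhds t] fun s => s := by
      filter_upwards [Ioo_mem_nhds ht0 h] with s hs
      exact CAsym_left hs.1.le hs.2.le
    rw [hev.deriv_eq, deriv_id'']
    simp [gAsym, h]
  rcases lt_or_gt_of_ne hne2 with h2 | h2
  · -- v/2 < t < (v+1)/2
    have hev : (fun s => CAsym s v) =ᶠ[nhds t] fun s => v / 2 + v * (s - v / 2) := by
      filter_upwards [Ioo_mem_nhds h h2] with s hs
      exact CAsym_mid hv hs.1.le hs.2.le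
    rw [hev.deriv_eq]
    have : HasDerivAt (fun s : ℝ => v / 2 + v * (s - v / 2)) v t := by
      simpa using (((hasDerivAt_id t).sub_const (v/2)).const_mul v).const_add (v/2)
    rw [this.deriv]
    simp [gAsym, not_lt.mpr h.le, h2]
  · -- t > (v+1)/2
    have hev : (fun s => CAsym s v) =ᶠ[nhds t] fun _ => v := by
      filter_upwards [Ioi_mem_nhds h2] with s hs
      exact CAsym_right hv hs.le
    rw [hev.deriv_eq, deriv_const]
    have : ¬ t < v / 2 := by push_neg; nlinarith
    simp [gAsym, this, not_lt.mpr h2.le]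

lemma gAsym_antitone {v : ℝ} (hv : 0 ≤ v) (hv1 : v ≤ 1) :
    AntitoneOn (gAsym v) (Icc (0:ℝ) 1) := by
  intro a _ b _ hab
  unfold gAsym
  split_ifs <;> linarith

lemma gAsym_sq_meas (v : ℝ) : Measurable (fun t => (gAsym v t)^2) := by
  unfold gAsym
  exact ((measurable_const.ite measurableSet_Iio
    (measurable_const.ite measurableSet_Iio measurable_const)).pow_const 2)

lemma gAsym_sq_intInt {v : ℝ} (hv : 0 ≤ v) (hv1 : v ≤ 1) (a b : ℝ) :
    IntervalIntegrable (fun t => (gAsym v t)^2) volume a b := by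
  refine bdd_intInt (gAsym_sq_meas v) 1 (fun t => ?_) a b
  rw [abs_le]
  unfold gAsym
  split_ifs <;> constructor <;> nlinarith

lemma gAsym_sq_integral {v : ℝ} (hv : 0 ≤ v) (hv1 : v ≤ 1) :
    ∫ t in (0:ℝ)..1, (gAsym v t)^2 = v / 2 + v^2 / 2 := by
  have h1 : (0:ℝ) ≤ v / 2 := by linarith
  have h2 : v / 2 ≤ (v + 1) / 2 := by linarith
  have h3 : (v + 1) / 2 ≤ 1 := by linarith
  have hs1 : (∫ t in (0:ℝ)..(v/2), (gAsym v t)^2) + ∫ t in (v/2)..((v+1)/2), (gAsym v t)^2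
      = ∫ t in (0:ℝ)..((v+1)/2), (gAsym v t)^2 :=
    intervalIntegral.integral_add_adjacent_intervals (gAsym_sq_intInt hv hv1 _ _)
      (gAsym_sq_intInt hv hv1 _ _)
  have hs2 : (∫ t in (0:ℝ)..((v+1)/2), (gAsym v t)^2) + ∫ t in ((v+1)/2)..1, (gAsym v t)^2
      = ∫ t in (0:ℝ)..1, (gAsym v t)^2 :=
    intervalIntegral.integral_add_adjacent_intervals (gAsym_sq_intInt hv hv1 _ _)
      (gAsym_sq_intInt hv hv1 _ _)
  have e1 : ∫ t in (0:ℝ)..(v/2), (gAsym v t)^2 = 1 * (v/2 - 0) := by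
    refine integral_eq_const_of_ae ?_
    filter_upwards [ae_ne (v/2)] with t ht hmem
    rw [Set.uIoc_of_le h1] at hmem
    have : t < v / 2 := lt_of_le_of_ne hmem.2 ht
    simp [gAsym, this]
  have e2 : ∫ t in (v/2)..((v+1)/2), (gAsym v t)^2 = v^2 * ((v+1)/2 - v/2) := by
    refine integral_eq_const_of_ae ?_
    filter_upwards [ae_ne ((v+1)/2)] with t ht hmem
    rw [Set.uIoc_of_le h2] at hmem
    have ha : ¬ t < v / 2 := not_lt.mpr hmem.1.le
    have hb : t < (v + 1) / 2 := lt_of_le_of_ne hmem.2 ht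
    simp [gAsym, ha, hb]
  have e3 : ∫ t in ((v+1)/2)..1, (gAsym v t)^2 = 0 * (1 - (v+1)/2) := by
    refine integral_eq_const_of_ae ?_
    filter_upwards with t hmem
    rw [Set.uIoc_of_le h3] at hmem
    have ha : ¬ t < v / 2 := by push_neg; nlinarith [hmem.1]
    have hb : ¬ t < (v + 1) / 2 := not_lt.mpr hmem.1.le
    simp [gAsym, ha, hb]
  rw [← hs2, ← hs1, e1, e2, e3]
  ring




lemma inner_integral {v : ℝ} (hv : 0 ≤ v) (hv1 : v ≤ 1) :
    ∫ t in (0:ℝ)..1, (d1 CAsym t v)^2 = v / 2 + v^2 / 2 := by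
  rw [← gAsym_sq_integral hv hv1]
  refine intervalIntegral.integral_congr_ae ?_
  filter_upwards [ae_ne (v/2), ae_ne ((v+1)/2), ae_ne (1:ℝ)] with t h1 h2 h3 hmem
  rw [Set.uIoc_of_le zero_le_one] at hmem
  rw [d1, deriv_CAsym hv hv1 hmem.1 (lt_of_le_of_ne hmem.2 h3) h1 h2]

lemma xi_CAsym : xi CAsym = 1 / 2 := by
  have : ∫ v in (0:ℝ)..1, ∫ t in (0:ℝ)..1, (d1 CAsym t v)^2
      = ∫ v in (0:ℝ)..1, (v / 2 + v^2 / 2) := by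
    refine intervalIntegral.integral_congr (fun v hv => ?_)
    rw [Set.uIcc_of_le zero_le_one] at hv
    exact inner_integral hv.1 hv.2
  rw [xi, this]
  have h1 : IntervalIntegrable (fun v : ℝ => v / 2) volume 0 1 :=
    (continuous_id.div_const 2).intervalIntegrable 0 1
  have h2 : IntervalIntegrable (fun v : ℝ => v ^ 2 / 2) volume 0 1 :=
    ((continuous_pow 2).div_const 2).intervalIntegrable 0 1
  rw [intervalIntegral.integral_add h1 h2]
  have A : ∫ v in (0:ℝ)..1, v / 2 = 1/4 := by
    norm_num [intervalIntegral.integral_div, integral_id]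
  have B : ∫ v in (0:ℝ)..1, v ^ 2 / 2 = 1/6 := by
    norm_num [intervalIntegral.integral_div, integral_pow]
  rw [A, B]; norm_num

lemma psi_CAsym : psi CAsym = 1 / 2 := by
  have : ∫ v in (0:ℝ)..1, CAsym v v = ∫ v in (0:ℝ)..1, (v / 2 + v^2 / 2) := by
    refine intervalIntegral.integral_congr (fun v hv => ?_)
    rw [Set.uIcc_of_le zero_le_one] at hv
    rw [CAsym_mid hv.1 (by linarith [hv.1]) (by linarith [hv.2])]
    ring
  rw [psi, this]
  have h1 : IntervalIntegrable (fun v : ℝ => v / 2) volume 0 1 :=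
    (continuous_id.div_const 2).intervalIntegrable 0 1
  have h2 : IntervalIntegrable (fun v : ℝ => v ^ 2 / 2) volume 0 1 :=
    ((continuous_pow 2).div_const 2).intervalIntegrable 0 1
  rw [intervalIntegral.integral_add h1 h2]
  have A : ∫ v in (0:ℝ)..1, v / 2 = 1/4 := by
    norm_num [intervalIntegral.integral_div, integral_id]
  have B : ∫ v in (0:ℝ)..1, v ^ 2 / 2 = 1/6 := by
    norm_num [intervalIntegral.integral_div, integral_pow]
  rw [A, B]; norm_num

lemma hAsym_nonneg {v : ℝ} (hv : 0 ≤ v) (t : ℝ) : 0 ≤ hAsym t v := by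
  unfold hAsym
  split_ifs <;> simp <;> positivity

lemma CAsym_sub (v u₁ u₂ : ℝ) :
    CAsym u₂ v - CAsym u₁ v = ∫ t in u₁..u₂, hAsym t v :=
  intervalIntegral.integral_interval_sub_left (hAsym_intInt v 0 u₂) (hAsym_intInt v 0 u₁)

lemma hAsym_mono {v₁ v₂ : ℝ} (h0 : 0 ≤ v₁) (h12 : v₁ ≤ v₂) (h1 : v₂ ≤ 1) :
    ∀ᵐ t ∂(volume : Measure ℝ), hAsym t v₁ ≤ hAsym t v₂ := by
  filter_upwards [ae_ne (v₁/2), ae_ne ((v₁+1)/2), ae_ne (v₂/2), ae_ne ((v₂+1)/2)]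
    with t n1 n2 n3 n4
  by_cases hA : t < v₁ / 2
  · have hB : t < v₂ / 2 := lt_of_lt_of_le hA (by linarith)
    have e1 : t ∉ Ioo (v₁/2) ((v₁+1)/2) := fun hx => absurd hA (not_lt.2 hx.1.le)
    have e2 : t ∉ Ioo (v₂/2) ((v₂+1)/2) := fun hx => absurd hB (not_lt.2 hx.1.le)
    simp [hAsym, hA, hB, e1, e2]
  by_cases hC : t < (v₁+1)/2
  · have hA' : v₁/2 < t := lt_of_le_of_ne (not_lt.1 hA) (Ne.symm n1)
    have e1 : t ∈ Ioo (v₁/2) ((v₁+1)/2) := ⟨hA', hC⟩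
    by_cases hB : t < v₂ / 2
    · have e2 : t ∉ Ioo (v₂/2) ((v₂+1)/2) := fun hx => absurd hB (not_lt.2 hx.1.le)
      simp [hAsym, hA, hB, e1, e2]
      linarith
    · have hB' : v₂/2 < t := lt_of_le_of_ne (not_lt.1 hB) (Ne.symm n3)
      have e2 : t ∈ Ioo (v₂/2) ((v₂+1)/2) := ⟨hB', by linarith⟩
      simp [hAsym, hA, hB, e1, e2]
      linarith
  · have hC' : (v₁+1)/2 < t := lt_of_le_of_ne (not_lt.1 hC) (Ne.symm n2)
    have e1 : t ∉ Ioo (v₁/2) ((v₁+1)/2) := fun hx => absurd hx.2 (not_lt.2 hC'.le)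
    have h0' : ¬ t < v₁/2 := hA
    calc hAsym t v₁ = 0 := by simp [hAsym, h0', e1]
      _ ≤ hAsym t v₂ := hAsym_nonneg (by linarith) t


lemma CAsym_copula : IsCopula CAsym := by
  have key : ∀ v ∈ Icc (0:ℝ) 1, CAsym 1 v = v := fun v hv =>
    CAsym_right hv.1 (by linarith [hv.2])
  refine ⟨?_, ?_, ?_, ?_⟩
  · intro u hu v hv
    constructor
    · have h0 : CAsym 0 v = 0 := by simp [CAsym]
      have hs := CAsym_sub v 0 u
      have hnn : 0 ≤ ∫ t in (0:ℝ)..u, hAsym t v :=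
        intervalIntegral.integral_nonneg hu.1 (fun t _ => hAsym_nonneg hv.1 t)
      linarith
    · have : CAsym 1 v - CAsym u v = ∫ t in u..1, hAsym t v := CAsym_sub v u 1
      have hnn : 0 ≤ ∫ t in u..1, hAsym t v :=
        intervalIntegral.integral_nonneg hu.2 (fun t _ => hAsym_nonneg hv.1 t)
      have := key v hv
      linarith [hv.2, CAsym_sub v u 1]
  · intro u hu
    constructor
    · rcases le_total u (1/2 : ℝ) with h | h
      · rw [CAsym_mid le_rfl (by linarith [hu.1]) (by norm_num; linarith)]
        ring
      · rw [CAsym_right le_rfl (by norm_num; linarith)]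
    · rcases le_total u (1/2 : ℝ) with h | h
      · rw [CAsym_left hu.1 (by linarith)]
      · rw [CAsym_mid zero_le_one (by linarith) (by norm_num; linarith [hu.2])]
        ring
  · intro v hv
    exact ⟨by simp [CAsym], key v hv⟩
  · intro u₁ hu₁ u₂ hu₂ v₁ hv₁ v₂ hv₂ hu hv
    have e1 := CAsym_sub v₂ u₁ u₂
    have e2 := CAsym_sub v₁ u₁ u₂
    have hmono : (∫ t in u₁..u₂, hAsym t v₁) ≤ ∫ t in u₁..u₂, hAsym t v₂ :=
      intervalIntegral.integral_mono_ae hu (hAsym_intInt v₁ u₁ u₂) (hAsym_intInt v₂ u₁ u₂)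
        (hAsym_mono hv₁.1 hv hv₂.2)
    linarith

lemma CAsym_SI : IsSI CAsym := by
  intro v hv
  refine ⟨gAsym v, gAsym_antitone hv.1 hv.2, ?_⟩
  have h0 : ∀ᵐ t ∂(volume.restrict (Icc (0:ℝ) 1)), t ∈ Icc (0:ℝ) 1 :=
    ae_restrict_mem measurableSet_Icc
  have hbad : ∀ᵐ t ∂(volume : Measure ℝ),
      t ≠ 0 ∧ t ≠ 1 ∧ t ≠ v/2 ∧ t ≠ (v+1)/2 := by
    filter_upwards [ae_ne 0, ae_ne 1, ae_ne (v/2), ae_ne ((v+1)/2)] with t a b c d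
    exact ⟨a, b, c, d⟩
  filter_upwards [h0, ae_restrict_of_ae hbad] with t hmem ⟨a, b, c, d⟩
  exact deriv_CAsym hv.1 hv.2 (lt_of_le_of_ne hmem.1 (Ne.symm a))
    (lt_of_le_of_ne hmem.2 b) c d


/-- `CAsym` is a stochastically increasing bivariate copula with
`ξ(C) = ψ(C)` that is not symmetric. -/
theorem CAsym_si_xi_eq_psi_not_symmetric :
    IsCopula CAsym ∧ IsSI CAsym ∧ xi CAsym = psi CAsym ∧
    ∃ u ∈ Icc (0:ℝ) 1, ∃ v ∈ Icc (0:ℝ) 1, CAsym u v ≠ CAsym v u := by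
  refine ⟨CAsym_copula, CAsym_SI, by rw [xi_CAsym, psi_CAsym], 1/2, by norm_num, 1/4, by norm_num, ?_⟩
  have e1 : CAsym (1/2) (1/4) = 7/32 := by
    rw [CAsym_mid (by norm_num) (by norm_num) (by norm_num)]; norm_num
  have e2 : CAsym (1/4) (1/2) = 1/4 := CAsym_left (by norm_num) (by norm_num)
  rw [e1, e2]; norm_num
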